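/- Let n ≥ 3 and let C_n be the cycle graph on vertices [n]. The injective linear map φ : (ℚ^n)^* → (ℚ^{n+1})^* defined by φ(x_i) = x_{i+1} − x_i for 1 ≤ i < n and φ(x_n) = x_1 − x_n − x_{n+1} maps the set of hyperplanes of the connected subgraph arrangement 𝒜_{C_n} bijectively onto the set of hyperplanes of the cone c Ŝ_n of the n-th Shi arrangement; that is, H ↦ ker(φ(α_H)) is a bijection from 𝒜_{C_n} onto c Ŝ_n. -/

import Mathlib

open Finset

/-- The linear form `∑_{i ∈ I} x_i` on `ℚ^n`. -/
noncomputable def linForm {n : ℕ} (I : Finset (Fin n)) : (Fin n → ℚ) →ₗ[ℚ] ℚ :=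
  ∑ i ∈ I, LinearMap.proj i

/-- `I` is a nonempty subset of vertices inducing a connected subgraph of `G`. -/
def ConnSet {n : ℕ} (G : SimpleGraph (Fin n)) (I : Finset (Fin n)) : Prop :=
  I.Nonempty ∧ (G.induce (↑I : Set (Fin n))).Connected

/-- The connected subgraph arrangement of `G`, as a set of hyperplanes of `ℚ^n`. -/
def csa {n : ℕ} (G : SimpleGraph (Fin n)) : Set (Submodule ℚ (Fin n → ℚ)) :=
  {H | ∃ I : Finset (Fin n), ConnSet G I ∧ H = LinearMap.ker (linForm I)}

/-- The almost path graph `A_{n,k}` (paper notation, vertices `1,…,n+1` realized as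
`Fin (n+1)` with `0,…,n`): a path `1–⋯–n` together with the edge `{k, n+1}`. -/
def almostPath (n k : ℕ) : SimpleGraph (Fin (n + 1)) :=
  SimpleGraph.fromRel (fun a b =>
    (a.val + 1 = b.val ∧ b.val < n) ∨ (a.val = k - 1 ∧ b.val = n))

/-- The path-with-triangle graph `Δ_{n,k}` (paper notation): a path `1–⋯–n` together
with the edges `{k, n+1}` and `{k+1, n+1}`. -/
def pathTriangle (n k : ℕ) : SimpleGraph (Fin (n + 1)) :=
  SimpleGraph.fromRel (fun a b =>
    (a.val + 1 = b.val ∧ b.val < n) ∨ (a.val = k - 1 ∧ b.val = n) ∨ (a.val = k ∧ b.val = n))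

/-- The module of `𝒜_G`-derivations `D(𝒜_G) ⊆ Der_ℚ(ℚ[x_1,…,x_n])`. -/
noncomputable def derModule {n : ℕ} (G : SimpleGraph (Fin n)) :
    Submodule (MvPolynomial (Fin n) ℚ)
      (Derivation ℚ (MvPolynomial (Fin n) ℚ) (MvPolynomial (Fin n) ℚ)) where
  carrier := {θ | ∀ I : Finset (Fin n), ConnSet G I →
    (∑ i ∈ I, MvPolynomial.X i) ∣ θ (∑ i ∈ I, MvPolynomial.X i)}
  add_mem' := by
    intro a b ha hb I hI
    rw [Derivation.add_apply]
    exact dvd_add (ha I hI) (hb I hI)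
  zero_mem' := by
    intro I hI
    simp
  smul_mem' := by
    intro c θ hθ I hI
    rw [Derivation.smul_apply, smul_eq_mul]
    exact (hθ I hI).mul_left c

/-- The coordinate linear form `x_i` on `ℚ^m`. -/
noncomputable def coord {m : ℕ} (i : Fin m) : (Fin m → ℚ) →ₗ[ℚ] ℚ := LinearMap.proj i

/-- The linear map `T : ℚ^{n+1} → ℚ^n` whose dual map is the embedding
`φ : (ℚ^n)^* → (ℚ^{n+1})^*`, `φ(x_i) = x_{i+1} − x_i` for `1 ≤ i < n` and
`φ(x_n) = x_1 − x_n − x_{n+1}` (all indices written 1-based as in the paper,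
0-based in the formalization). -/
noncomputable def shiT (n : ℕ) : (Fin (n + 1) → ℚ) →ₗ[ℚ] (Fin n → ℚ) :=
  LinearMap.pi fun a : Fin n =>
    if a.val + 1 < n then coord a.succ - coord a.castSucc
    else coord 0 - coord a.castSucc - coord (Fin.last n)

/-- The cone over the `n`-th Shi arrangement: the hyperplanes `ker(x_i − x_j)` and
`ker(x_i − x_j − x_{n+1})` for `1 ≤ i < j ≤ n` together with `ker(x_{n+1})`,
in `ℚ^{n+1}`. -/
def shiCone (n : ℕ) : Set (Submodule ℚ (Fin (n + 1) → ℚ)) :=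
  {H | (∃ i j : Fin n, i < j ∧
          H = LinearMap.ker (coord i.castSucc - coord j.castSucc)) ∨
       (∃ i j : Fin n, i < j ∧
          H = LinearMap.ker (coord i.castSucc - coord j.castSucc - coord (Fin.last n))) ∨
       H = LinearMap.ker (coord (Fin.last n))}

namespace CsaShiAux

open Finset SimpleGraph
open scoped Fin.NatCast Fin.CommRing

variable {n : ℕ}

/-- The arc `{a, a+1, …, a+m-1}` (mod `n`) in `Fin n`. -/
def arc [NeZero n] (a : Fin n) (m : ℕ) : Finset (Fin n) :=
  Finset.filter (fun x => (x - a).val < m) Finset.univ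

lemma mem_arc [NeZero n] {a x : Fin n} {m : ℕ} : x ∈ arc a m ↔ (x - a).val < m := by
  simp [arc]

lemma self_mem_arc [NeZero n] {a : Fin n} {m : ℕ} (hm : 1 ≤ m) : a ∈ arc a m := by
  rw [mem_arc]; simp; omega

lemma add_cast_mem_arc [NeZero n] {a : Fin n} {m t : ℕ} (ht : t < m) (hm : m ≤ n) :
    a + (t : Fin n) ∈ arc a m := by
  rw [mem_arc, add_sub_cancel_left, Fin.val_cast_of_lt (by omega)]
  exact ht

lemma arc_univ [NeZero n] (a : Fin n) : arc a n = Finset.univ := by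
  ext x; simp [mem_arc, Fin.is_lt]

lemma not_mem_arc_self [NeZero n] (a : Fin n) {m : ℕ} (hm : m < n) :
    a + (m : Fin n) ∉ arc a m := by
  rw [mem_arc, add_sub_cancel_left, Fin.val_cast_of_lt hm]
  omega

lemma arc_succ [NeZero n] (a : Fin n) {m : ℕ} (hm : m + 1 ≤ n) :
    arc a (m + 1) = insert (a + (m : Fin n)) (arc a m) := by
  have hmn : m < n := hm
  ext x
  simp only [mem_arc, Finset.mem_insert]
  constructor
  · intro h
    rcases Nat.lt_succ_iff_lt_or_eq.mp h with h | h
    · exact Or.inr h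
    · left
      have hx : x - a = (m : Fin n) := Fin.ext (by rw [h, Fin.val_cast_of_lt hmn])
      rw [← add_sub_cancel a x] at *
      rw [add_sub_cancel_left] at hx
      rw [hx]
  · rintro (rfl | h)
    · rw [add_sub_cancel_left, Fin.val_cast_of_lt hmn]; omega
    · omega

end CsaShiAux
namespace CsaShiAux

open Finset SimpleGraph
open scoped Fin.NatCast Fin.CommRing

variable {n : ℕ}

lemma coord_congr {m : ℕ} {i j : Fin m} (h : i.val = j.val) : coord i = coord j := by
  congr 1; exact Fin.ext h

lemma linForm_empty : linForm (∅ : Finset (Fin n)) = 0 := by simp [linForm]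

lemma linForm_insert {x : Fin n} {I : Finset (Fin n)} (h : x ∉ I) :
    linForm (insert x I) = LinearMap.proj x + linForm I := by
  simp [linForm, Finset.sum_insert h]

/-- The explicit image of `linForm (arc a m)` under composition with `shiT n`. -/
noncomputable def tf (a : Fin n) (m : ℕ) (hm : m ≤ n) : (Fin (n + 1) → ℚ) →ₗ[ℚ] ℚ :=
  if _ : a.val + m < n then
    coord (⟨a.val + m, by omega⟩ : Fin (n + 1)) - coord a.castSucc
  else
    coord (⟨a.val + m - n, by have := a.isLt; omega⟩ : Fin (n + 1)) - coord a.castSucc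
      - coord (Fin.last n)

lemma linForm_arc_comp [NeZero n] (a : Fin n) : ∀ (m : ℕ) (hm : m ≤ n),
    (linForm (arc a m)).comp (shiT n) = tf a m hm := by
  intro m
  induction m with
  | zero =>
      intro hm
      have harc : arc a 0 = ∅ := by ext x; simp [mem_arc]
      have h0 : a.val + 0 < n := by have := a.isLt; omega
      rw [harc, linForm_empty, tf, dif_pos h0,
        coord_congr (i := (⟨a.val + 0, by omega⟩ : Fin (n+1))) (j := a.castSucc) (by simp)]
      simp
  | succ m ih =>
      intro hm
      have hmn : m < n := by omega
      rw [arc_succ a hm, linForm_insert (not_mem_arc_self a hmn), LinearMap.add_comp,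
        ih (by omega)]
      simp only [shiT, LinearMap.proj_pi]
      have hbv : (a + (m : Fin n)).val = (a.val + m) % n := by
        rw [Fin.add_def, Fin.val_cast_of_lt hmn]
      by_cases h1 : a.val + m < n
      · have hb : (a + (m : Fin n)).val = a.val + m := by rw [hbv, Nat.mod_eq_of_lt h1]
        rw [tf, dif_pos h1]
        by_cases h2 : a.val + m + 1 < n
        · rw [if_pos (by omega : (a + (m : Fin n)).val + 1 < n), tf, dif_pos (by omega)]
          rw [coord_congr (i := (a + (m : Fin n)).succ)
              (j := (⟨a.val + (m+1), by omega⟩ : Fin (n+1))) (by simp [hb]; omega),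
            coord_congr (i := Fin.castSucc (a + (m : Fin n)))
              (j := (⟨a.val + m, by omega⟩ : Fin (n+1))) (by simp [hb])]
          abel
        · rw [if_neg (by omega : ¬ ((a + (m : Fin n)).val + 1 < n)), tf,
            dif_neg (by omega : ¬ (a.val + (m+1) < n))]
          rw [coord_congr (i := Fin.castSucc (a + (m : Fin n)))
              (j := (⟨a.val + m, by omega⟩ : Fin (n+1))) (by simp [hb]),
            coord_congr (i := (0 : Fin (n+1)))
              (j := (⟨a.val + (m+1) - n, by omega⟩ : Fin (n+1))) (by simp; omega)]
          abel
      · have hb : (a + (m : Fin n)).val = a.val + m - n := by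
          rw [hbv, Nat.mod_eq_sub_mod (by omega), Nat.mod_eq_of_lt (by have := a.isLt; omega)]
        have hba : (a + (m : Fin n)).val + 1 < n := by have := a.isLt; omega
        rw [tf, dif_neg h1, if_pos hba, tf, dif_neg (by omega : ¬ (a.val + (m+1) < n))]
        rw [coord_congr (i := (a + (m : Fin n)).succ)
            (j := (⟨a.val + (m+1) - n, by omega⟩ : Fin (n+1))) (by simp [hb]; omega),
          coord_congr (i := Fin.castSucc (a + (m : Fin n)))
            (j := (⟨a.val + m - n, by omega⟩ : Fin (n+1))) (by simp [hb])]
        abel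

end CsaShiAux
namespace CsaShiAux

open Finset SimpleGraph
open scoped Fin.NatCast Fin.CommRing

variable {n : ℕ}

lemma shiT_surjective (hn : 0 < n) : Function.Surjective (shiT n) := by
  intro y
  refine ⟨fun j => if h : (j : ℕ) < n then
      ∑ i ∈ Finset.univ.filter (fun i : Fin n => (i : ℕ) < (j : ℕ)), y i
    else -(∑ i, y i), ?_⟩
  funext a
  simp only [shiT, LinearMap.pi_apply]
  by_cases h : a.val + 1 < n
  · rw [if_pos h]
    simp only [LinearMap.sub_apply, coord, LinearMap.proj_apply]
    rw [dif_pos (by simp [h] : ((a.succ : Fin (n+1)) : ℕ) < n),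
      dif_pos (by simpa using a.isLt : ((a.castSucc : Fin (n+1)) : ℕ) < n)]
    have hset : Finset.univ.filter (fun i : Fin n => (i : ℕ) < ((a.succ : Fin (n+1)) : ℕ))
        = insert a (Finset.univ.filter (fun i : Fin n => (i : ℕ) < ((a.castSucc : Fin (n+1)) : ℕ))) := by
      ext i
      simp only [Finset.mem_filter, Finset.mem_insert, Finset.mem_univ, true_and,
        Fin.val_succ, Fin.coe_castSucc, Fin.ext_iff, true_iff, iff_true]
      omega
    rw [hset, Finset.sum_insert (by simp)]
    ring
  · rw [if_neg h]
    simp only [LinearMap.sub_apply, coord, LinearMap.proj_apply]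
    rw [dif_pos (by simpa using hn : ((0 : Fin (n+1)) : ℕ) < n),
      dif_pos (by simpa using a.isLt : ((a.castSucc : Fin (n+1)) : ℕ) < n),
      dif_neg (by simp : ¬ ((Fin.last n : Fin (n+1)) : ℕ) < n)]
    have h0 : Finset.univ.filter (fun i : Fin n => (i : ℕ) < ((0 : Fin (n+1)) : ℕ)) = ∅ := by
      ext i; simp
    have huniv : (Finset.univ : Finset (Fin n))
        = insert a (Finset.univ.filter (fun i : Fin n => (i : ℕ) < ((a.castSucc : Fin (n+1)) : ℕ))) := by
      ext i
      simp only [Finset.mem_filter, Finset.mem_insert, Finset.mem_univ, true_and,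
        Fin.coe_castSucc, Fin.ext_iff, true_iff, iff_true]
      have := i.isLt
      omega
    have hsum : (∑ i, y i)
        = y a + ∑ i ∈ Finset.univ.filter (fun i : Fin n => (i : ℕ) < ((a.castSucc : Fin (n+1)) : ℕ)), y i := by
      conv_lhs => rw [huniv]
      rw [Finset.sum_insert (by simp)]
    rw [h0, Finset.sum_empty, hsum]
    ring

end CsaShiAux
namespace CsaShiAux

open Finset SimpleGraph
open scoped Fin.NatCast Fin.CommRing

variable {n : ℕ}

lemma walk_closed {G : SimpleGraph (Fin n)} {I : Finset (Fin n)} (S : Finset (Fin n))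
    (hS : ∀ x ∈ S, x ∈ I → ∀ y ∈ I, G.Adj x y → y ∈ S) :
    ∀ {u v : (↑I : Set (Fin n))} (_ : (G.induce (↑I : Set (Fin n))).Walk u v),
      (u : Fin n) ∈ S → (v : Fin n) ∈ S := by
  intro u v w
  induction w with
  | nil => exact id
  | @cons u' v' w' h p ih =>
      intro hu
      have hadj : G.Adj (u' : Fin n) (v' : Fin n) := h
      exact ih (hS _ hu (Finset.mem_coe.mp u'.2) _ (Finset.mem_coe.mp v'.2) hadj)

/-- one-step adjacency in the cycle graph -/
lemma cycle_adj_succ [NeZero n] (hn : 3 ≤ n) (x : Fin n) :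
    (SimpleGraph.cycleGraph n).Adj x (x + 1) := by
  rw [SimpleGraph.cycleGraph_adj']
  right
  rw [add_sub_cancel_left, Fin.val_one', Nat.mod_eq_of_lt (by omega)]

lemma arc_conn [NeZero n] (hn : 3 ≤ n) (a : Fin n) {m : ℕ} (h1 : 1 ≤ m) (hm : m ≤ n) :
    ConnSet (SimpleGraph.cycleGraph n) (arc a m) := by
  have ha : a ∈ arc a m := self_mem_arc h1
  have ha' : (a : Fin n) ∈ (↑(arc a m) : Set (Fin n)) := ha
  haveI : Nonempty (↑(arc a m) : Set (Fin n)) := ⟨⟨a, ha'⟩⟩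
  refine ⟨⟨a, ha⟩, SimpleGraph.Connected.mk ?_⟩
  -- reachability of a + t from a, for t < m
  have key : ∀ t : ℕ, t < m → ∀ hmem : (a + (t : Fin n)) ∈ (↑(arc a m) : Set (Fin n)),
      ((SimpleGraph.cycleGraph n).induce (↑(arc a m) : Set (Fin n))).Reachable
        ⟨a, ha'⟩ ⟨a + (t : Fin n), hmem⟩ := by
    intro t
    induction t with
    | zero =>
        intro _ hmem
        have e : (⟨a + ((0 : ℕ) : Fin n), hmem⟩ : (↑(arc a m) : Set (Fin n))) = ⟨a, ha'⟩ :=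
          Subtype.ext (by simp)
        rw [e]
    | succ t ih =>
        intro ht hmem
        have hmem' : (a + (t : Fin n)) ∈ (↑(arc a m) : Set (Fin n)) :=
          add_cast_mem_arc (by omega) hm
        have hreach := ih (by omega) hmem'
        have hadj : (SimpleGraph.cycleGraph n).Adj (a + (t : Fin n)) (a + ((t + 1 : ℕ) : Fin n)) := by
          have : a + ((t + 1 : ℕ) : Fin n) = (a + (t : Fin n)) + 1 := by
            push_cast
            ring
          rw [this]
          exact cycle_adj_succ hn _
        have hadj' : ((SimpleGraph.cycleGraph n).induce (↑(arc a m) : Set (Fin n))).Adj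
            ⟨a + (t : Fin n), hmem'⟩ ⟨a + ((t + 1 : ℕ) : Fin n), hmem⟩ := hadj
        exact hreach.trans hadj'.reachable
  intro u v
  obtain ⟨x, hx⟩ := u
  obtain ⟨y, hy⟩ := v
  have hx' : x ∈ arc a m := hx
  have hy' : y ∈ arc a m := hy
  have ex : a + (((x - a).val : ℕ) : Fin n) = x := by
    rw [Fin.cast_val_eq_self, add_sub_cancel]
  have ey : a + (((y - a).val : ℕ) : Fin n) = y := by
    rw [Fin.cast_val_eq_self, add_sub_cancel]
  have rx := key (x - a).val (mem_arc.mp hx') (by rw [ex]; exact hx)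
  have ry := key (y - a).val (mem_arc.mp hy') (by rw [ey]; exact hy)
  have exS : (⟨a + (((x - a).val : ℕ) : Fin n), by rw [ex]; exact hx⟩ :
      (↑(arc a m) : Set (Fin n))) = ⟨x, hx⟩ := Subtype.ext ex
  have eyS : (⟨a + (((y - a).val : ℕ) : Fin n), by rw [ey]; exact hy⟩ :
      (↑(arc a m) : Set (Fin n))) = ⟨y, hy⟩ := Subtype.ext ey
  have RX : ((SimpleGraph.cycleGraph n).induce (↑(arc a m) : Set (Fin n))).Reachable
      ⟨a, ha'⟩ ⟨x, hx⟩ := by rw [← exS]; exact rx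
  have RY : ((SimpleGraph.cycleGraph n).induce (↑(arc a m) : Set (Fin n))).Reachable
      ⟨a, ha'⟩ ⟨y, hy⟩ := by rw [← eyS]; exact ry
  exact RX.symm.trans RY

end CsaShiAux
namespace CsaShiAux

open Finset SimpleGraph
open scoped Fin.NatCast Fin.CommRing

variable {n : ℕ}

lemma cast_pred_eq_sub_one [NeZero n] {t : ℕ} (ht : 1 ≤ t) :
    ((t : ℕ) : Fin n) - 1 = ((t - 1 : ℕ) : Fin n) := by
  have : ((t - 1 : ℕ) : Fin n) + 1 = ((t : ℕ) : Fin n) := by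
    push_cast
    rw [Nat.cast_sub ht]
    push_cast
    ring
  rw [← this, add_sub_cancel_right]

lemma conn_arc [NeZero n] (hn : 3 ≤ n) {I : Finset (Fin n)} (hI : ConnSet (SimpleGraph.cycleGraph n) I) :
    ∃ (a : Fin n) (m : ℕ), 1 ≤ m ∧ m ≤ n ∧ I = arc a m := by
  by_cases hu : I = Finset.univ
  · exact ⟨0, n, by omega, le_refl n, by rw [hu, arc_univ]⟩
  -- find a boundary vertex a ∈ I with a - 1 ∉ I
  obtain ⟨b, hb⟩ : ∃ b, b ∉ I := by
    by_contra h
    push_neg at h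
    exact hu (Finset.eq_univ_iff_forall.mpr h)
  obtain ⟨c, hc⟩ := hI.1
  have hPex : ∃ s : ℕ, b + (s : Fin n) ∈ I := by
    refine ⟨(c - b).val, ?_⟩
    rw [Fin.cast_val_eq_self, add_sub_cancel]
    exact hc
  classical
  set t := Nat.find hPex with htdef
  have htI : b + (t : Fin n) ∈ I := Nat.find_spec hPex
  have ht1 : 1 ≤ t := by
    rcases Nat.eq_zero_or_pos t with h | h
    · exfalso; apply hb; have := htI; rw [h] at this; simpa using this
    · exact h
  set a := b + (t : Fin n) with hadef
  have haI : a ∈ I := htI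
  have haM : a - 1 ∉ I := by
    have : a - 1 = b + ((t - 1 : ℕ) : Fin n) := by
      rw [hadef, sub_eq_add_neg, add_assoc, ← sub_eq_add_neg, cast_pred_eq_sub_one ht1]
    rw [this]
    exact Nat.find_min hPex (by omega)
  -- minimal exit point from a
  have hQex : ∃ j : ℕ, a + (j : Fin n) ∉ I := by
    refine ⟨n - 1, ?_⟩
    have : ((n - 1 : ℕ) : Fin n) = -1 := by
      have h1 : ((n - 1 : ℕ) : Fin n) + 1 = 0 := by
        have : ((n : ℕ) : Fin n) = 0 := Fin.natCast_self n
        rw [← this]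
        norm_cast
        congr 1
        omega
      linear_combination h1
    rw [this, ← sub_eq_add_neg]
    exact haM
  set m := Nat.find hQex with hmdef
  have hmI : a + (m : Fin n) ∉ I := Nat.find_spec hQex
  have hm1 : 1 ≤ m := by
    rcases Nat.eq_zero_or_pos m with h | h
    · exfalso; apply hmI; rw [h]; simpa using haI
    · exact h
  have hmn : m ≤ n - 1 := Nat.find_min' hQex (by
    have : ((n - 1 : ℕ) : Fin n) = -1 := by
      have h1 : ((n - 1 : ℕ) : Fin n) + 1 = 0 := by
        rw [show ((n - 1 : ℕ) : Fin n) + 1 = ((n - 1 + 1 : ℕ) : Fin n) by push_cast; ring,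
          show n - 1 + 1 = n by omega]
        exact Fin.natCast_self n
      linear_combination h1
    rw [this, ← sub_eq_add_neg]
    exact haM)
  refine ⟨a, m, hm1, by omega, ?_⟩
  apply Finset.Subset.antisymm
  · -- I ⊆ arc a m, via closure
    intro x hx
    have hclosed : ∀ z ∈ arc a m, z ∈ I → ∀ y ∈ I, (SimpleGraph.cycleGraph n).Adj z y →
        y ∈ arc a m := by
      intro z hz hzI y hyI hadj
      have hzt : (z - a).val < m := mem_arc.mp hz
      have hza : a + (((z - a).val : ℕ) : Fin n) = z := by
        rw [Fin.cast_val_eq_self, add_sub_cancel]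
      rw [SimpleGraph.cycleGraph_adj'] at hadj
      rcases hadj with h | h
      · -- z - y = 1, i.e. y = z - 1
        have hy : y = z - 1 := by
          have : z - y = 1 := Fin.ext (by rw [h, Fin.val_one', Nat.mod_eq_of_lt (by omega)])
          linear_combination -this
        rcases Nat.eq_zero_or_pos (z - a).val with h0 | h0
        · -- z = a, y = a - 1 ∈ I: contradiction
          exfalso
          have hza' : z = a := by
            have : z - a = 0 := Fin.ext (by simpa using h0)
            linear_combination this
          rw [hy, hza'] at hyI
          exact haM hyI
        · rw [mem_arc, hy]
          have heq : z - 1 - a = ((((z - a).val - 1 : ℕ)) : Fin n) := by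
            rw [← cast_pred_eq_sub_one h0, Fin.cast_val_eq_self]
            ring
          rw [heq, Fin.val_cast_of_lt (by omega)]
          omega
      · -- y - z = 1, y = z + 1
        have hy : y = z + 1 := by
          have : y - z = 1 := Fin.ext (by rw [h, Fin.val_one', Nat.mod_eq_of_lt (by omega)])
          linear_combination this
        by_cases hlast : (z - a).val + 1 < m
        · rw [mem_arc, hy]
          have : z + 1 - a = (((z - a).val + 1 : ℕ) : Fin n) := by
            rw [Nat.cast_add, Nat.cast_one, Fin.cast_val_eq_self]
            ring
          rw [this, Fin.val_cast_of_lt (by omega)]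
          omega
        · -- y = a + m ∉ I: contradiction
          exfalso
          have : y = a + (m : Fin n) := by
            rw [hy, ← hza]
            have hm' : (z - a).val + 1 = m := by omega
            rw [show a + (((z - a).val : ℕ) : Fin n) + 1 = a + ((((z - a).val + 1 : ℕ)) : Fin n) by
              rw [Nat.cast_add, Nat.cast_one]; ring, hm']
          rw [this] at hyI
          exact hmI hyI
    -- now use the walk
    have hx' : (x : Fin n) ∈ (↑I : Set (Fin n)) := hx
    have ha' : (a : Fin n) ∈ (↑I : Set (Fin n)) := haI
    obtain ⟨w⟩ := hI.2.preconnected ⟨a, ha'⟩ ⟨x, hx'⟩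
    exact walk_closed (arc a m) hclosed w (self_mem_arc hm1)
  · -- arc a m ⊆ I
    intro x hx
    have hxt : (x - a).val < m := mem_arc.mp hx
    have := Nat.find_min hQex hxt
    push_neg at this
    have hxa : a + (((x - a).val : ℕ) : Fin n) = x := by
      rw [Fin.cast_val_eq_self, add_sub_cancel]
    rw [hxa] at this
    simpa using this

end CsaShiAux
namespace CsaShiAux

open Finset SimpleGraph
open scoped Fin.NatCast Fin.CommRing

variable {n : ℕ}

lemma ker_neg {M : Type*} [AddCommGroup M] [Module ℚ M] (f : M →ₗ[ℚ] ℚ) :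
    LinearMap.ker (-f) = LinearMap.ker f := by
  ext x
  simp

lemma ker_sub_comm {M : Type*} [AddCommGroup M] [Module ℚ M] (f g : M →ₗ[ℚ] ℚ) :
    LinearMap.ker (f - g) = LinearMap.ker (g - f) := by
  rw [← ker_neg (f - g), neg_sub]

end CsaShiAux
/-- For `n ≥ 3`, the injective linear map
`φ = (shiT n).dualMap : (ℚ^n)^* → (ℚ^{n+1})^*` (given by `φ(x_i) = x_{i+1} − x_i`
for `i < n` and `φ(x_n) = x_1 − x_n − x_{n+1}`) maps the hyperplanes of the connected
subgraph arrangement of the cycle `C_n` bijectively onto the hyperplanes of the cone of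
the `n`-th Shi arrangement; on hyperplanes, `H = ker α ↦ ker (φ α)` is exactly
`H ↦ Submodule.comap (shiT n) H`. -/
theorem csa_cycle_shi (n : ℕ) (hn : 3 ≤ n) :
    Function.Injective (shiT n).dualMap ∧
      Set.BijOn (fun H => Submodule.comap (shiT n) H)
        (csa (SimpleGraph.cycleGraph n)) (shiCone n) := by
  haveI : NeZero n := ⟨by omega⟩
  have hsurj : Function.Surjective (shiT n) := CsaShiAux.shiT_surjective (by omega)
  constructor
  · intro α β h
    refine LinearMap.ext fun x => ?_
    obtain ⟨y, rfl⟩ := hsurj x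
    have := DFunLike.congr_fun h y
    simpa [LinearMap.dualMap_apply] using this
  refine ⟨?_, ?_, ?_⟩
  · -- MapsTo
    rintro H ⟨I, hI, rfl⟩
    obtain ⟨a, m, hm1, hmn, rfl⟩ := CsaShiAux.conn_arc hn hI
    show _ ∈ shiCone n
    by_cases h1 : a.val + m < n
    · refine Or.inl ⟨a, ⟨a.val + m, h1⟩, by rw [Fin.lt_def]; simp; omega, ?_⟩
      show Submodule.comap (shiT n) _ = _
      rw [← LinearMap.ker_comp, CsaShiAux.linForm_arc_comp a m hmn, CsaShiAux.tf, dif_pos h1,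
        CsaShiAux.ker_sub_comm,
        CsaShiAux.coord_congr (i := (⟨a.val + m, by omega⟩ : Fin (n+1)))
          (j := (⟨a.val + m, h1⟩ : Fin n).castSucc) (by simp)]
    · by_cases h2 : m < n
      · refine Or.inr (Or.inl ⟨⟨a.val + m - n, by omega⟩, a, by rw [Fin.lt_def]; simp; omega, ?_⟩)
        show Submodule.comap (shiT n) _ = _
        rw [← LinearMap.ker_comp, CsaShiAux.linForm_arc_comp a m hmn, CsaShiAux.tf, dif_neg h1,
          CsaShiAux.coord_congr (i := (⟨a.val + m - n, by have := a.isLt; omega⟩ : Fin (n+1)))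
            (j := (⟨a.val + m - n, by omega⟩ : Fin n).castSucc) (by simp)]
      · have hm : m = n := by omega
        refine Or.inr (Or.inr ?_)
        show Submodule.comap (shiT n) _ = _
        rw [← LinearMap.ker_comp, CsaShiAux.linForm_arc_comp a m hmn, CsaShiAux.tf, dif_neg h1,
          CsaShiAux.coord_congr (i := (⟨a.val + m - n, by have := a.isLt; omega⟩ : Fin (n+1)))
            (j := a.castSucc) (by simp; omega),
          sub_self, zero_sub, CsaShiAux.ker_neg]
  · -- InjOn
    exact (Submodule.comap_injective_of_surjective hsurj).injOn
  · -- SurjOn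
    rintro H (⟨i, j, hij, rfl⟩ | ⟨i, j, hij, rfl⟩ | rfl)
    · have hij' : i.val < j.val := hij
      refine ⟨LinearMap.ker (linForm (CsaShiAux.arc i (j.val - i.val))),
        ⟨CsaShiAux.arc i (j.val - i.val),
          CsaShiAux.arc_conn hn i (by omega) (by have := j.isLt; omega), rfl⟩, ?_⟩
      show Submodule.comap (shiT n) _ = _
      rw [← LinearMap.ker_comp,
        CsaShiAux.linForm_arc_comp i (j.val - i.val) (by have := j.isLt; omega),
        CsaShiAux.tf, dif_pos (by have := j.isLt; omega : i.val + (j.val - i.val) < n),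
        CsaShiAux.coord_congr (i := (⟨i.val + (j.val - i.val), by have := j.isLt; omega⟩ : Fin (n+1)))
          (j := j.castSucc) (by simp; omega),
        CsaShiAux.ker_sub_comm]
    · have hij' : i.val < j.val := hij
      refine ⟨LinearMap.ker (linForm (CsaShiAux.arc j (n - j.val + i.val))),
        ⟨CsaShiAux.arc j (n - j.val + i.val),
          CsaShiAux.arc_conn hn j (by have := j.isLt; omega) (by omega), rfl⟩, ?_⟩
      show Submodule.comap (shiT n) _ = _
      rw [← LinearMap.ker_comp,
        CsaShiAux.linForm_arc_comp j (n - j.val + i.val) (by omega),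
        CsaShiAux.tf, dif_neg (by have := j.isLt; omega : ¬ (j.val + (n - j.val + i.val) < n)),
        CsaShiAux.coord_congr
          (i := (⟨j.val + (n - j.val + i.val) - n, by have := j.isLt; omega⟩ : Fin (n+1)))
          (j := i.castSucc) (by simp; have := j.isLt; omega)]
    · refine ⟨LinearMap.ker (linForm (CsaShiAux.arc (0 : Fin n) n)),
        ⟨CsaShiAux.arc (0 : Fin n) n, CsaShiAux.arc_conn hn 0 (by omega) le_rfl, rfl⟩, ?_⟩
      show Submodule.comap (shiT n) _ = _
      rw [← LinearMap.ker_comp, CsaShiAux.linForm_arc_comp (0 : Fin n) n le_rfl,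
        CsaShiAux.tf, dif_neg (by simp : ¬ ((0 : Fin n).val + n < n)),
        CsaShiAux.coord_congr
          (i := (⟨(0 : Fin n).val + n - n, by have := (0 : Fin n).isLt; omega⟩ : Fin (n+1)))
          (j := (0 : Fin n).castSucc) (by simp),
        sub_self, zero_sub, CsaShiAux.ker_neg]
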